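/- Every cycle with at least three edges is universal product antimagic. -/

import Mathlib

open scoped Classical

noncomputable def edgeFS {V : Type*} [Fintype V] (G : SimpleGraph V) : Finset (Sym2 V) :=
  G.edgeSet.toFinset

noncomputable def vSum {V : Type*} [Fintype V] (G : SimpleGraph V) (φ : Sym2 V → ℝ) (v : V) : ℝ :=
  ∑ e ∈ (edgeFS G).filter (fun e => v ∈ e), φ e

noncomputable def vProd {V : Type*} [Fintype V] (G : SimpleGraph V) (φ : Sym2 V → ℝ) (v : V) : ℝ :=
  ∏ e ∈ (edgeFS G).filter (fun e => v ∈ e), φ e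

/-- `G` has a product antimagic `L`-labeling for every set `L` of `(edgeFS G).card`
reals, all at least `1`. -/
def UnivProdAntimagic {V : Type*} [Fintype V] (G : SimpleGraph V) : Prop :=
  ∀ L : Finset ℝ, (∀ x ∈ L, 1 ≤ x) → L.card = (edgeFS G).card →
    ∃ φ : Sym2 V → ℝ, Set.BijOn φ ↑(edgeFS G) ↑L ∧ Function.Injective (vProd G φ)

namespace CycAux
open SimpleGraph Finset

lemma eq_sub_of' {G : Type*} [AddCommGroup G] {a b c : G} (h : a - b = c) : b = a - c := by
  rw [← h, sub_sub_cancel]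

lemma eq_add_of' {G : Type*} [AddCommGroup G] {a b c : G} (h : a - b = c) : a = b + c := by
  rw [← h]; abel

def fnat (n i : ℕ) : ℕ := if 2 * i < n then 2 * i else 2 * (n - i) - 1

lemma fnat_lt {n i : ℕ} (hn : 1 ≤ n) (hi : i < n) : fnat n i < n := by
  unfold fnat; split_ifs <;> omega

variable {m : ℕ}

def fz (m : ℕ) : Fin (m+3) → Fin (m+3) :=
  fun i => ⟨fnat (m+3) i.val, fnat_lt (by omega) i.isLt⟩

lemma fz_inj : Function.Injective (fz m) := by
  intro i j h
  have h1 := i.isLt; have h2 := j.isLt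
  have h3 : fnat (m+3) i.val = fnat (m+3) j.val := congrArg Fin.val h
  unfold fnat at h3
  apply Fin.ext
  split_ifs at h3 <;> omega

lemma val_pred (v : Fin (m+3)) : (v - 1).val = if v.val = 0 then m+2 else v.val - 1 := by
  have hv := v.isLt
  rw [Fin.sub_def]
  have h1 : (1 : Fin (m+3)).val = 1 := rfl
  rw [h1]
  show (m + 3 - 1 + v.val) % (m+3) = _
  rcases Nat.eq_zero_or_pos v.val with h | h
  · rw [h, if_pos rfl]
    exact Nat.mod_eq_of_lt (by omega)
  · rw [if_neg (by omega)]
    have h2 : m + 3 - 1 + v.val = (m+3) + (v.val - 1) := by omega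
    rw [h2, Nat.add_mod_left, Nat.mod_eq_of_lt (by omega)]

lemma two_ne_zero' : (2 : Fin (m+3)) ≠ 0 := by
  intro h
  have h0 : ((2 : Fin (m+3))).val = 0 := by rw [h]; rfl
  have h2 : ((2 : Fin (m+3))).val = 2 % (m+3) := rfl
  rw [h2, Nat.mod_eq_of_lt (by omega)] at h0
  omega

lemma e_inj : Function.Injective (fun i : Fin (m+3) => s(i, i+1)) := by
  intro i j h
  simp only [Sym2.eq_iff] at h
  rcases h with ⟨h1, _⟩ | ⟨h1, h2⟩
  · exact h1
  · exfalso
    apply two_ne_zero' (m := m)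
    have h3 : i + 2 = i := by
      calc i + 2 = i + 1 + 1 := by rw [add_assoc]; exact congrArg (i + ·) (Fin.ext (by rw [Fin.val_add]; rfl))
        _ = j + 1 := by rw [h2]
        _ = i := h1.symm
    have := congrArg (· - i) h3
    simpa [add_sub_cancel_left] using this

lemma adj_iff (u v : Fin (m+3)) :
    (cycleGraph (m+3)).Adj u v ↔ u - v = 1 ∨ v - u = 1 := by
  rw [SimpleGraph.cycleGraph_adj']
  have h1 : (1 : Fin (m+3)).val = 1 := rfl
  constructor
  · rintro (h | h)
    · exact Or.inl (Fin.ext (by rw [h, h1]))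
    · exact Or.inr (Fin.ext (by rw [h, h1]))
  · rintro (h | h)
    · exact Or.inl (by rw [h, h1])
    · exact Or.inr (by rw [h, h1])

lemma edge_char (v : Fin (m+3)) (e : Sym2 (Fin (m+3))) :
    (e ∈ edgeFS (cycleGraph (m+3)) ∧ v ∈ e) ↔ (e = s(v-1, v) ∨ e = s(v, v+1)) := by
  induction e using Sym2.ind with
  | _ a b =>
    simp only [edgeFS, Set.mem_toFinset, mem_edgeSet, Sym2.mem_iff, adj_iff, Sym2.eq_iff]
    constructor
    · rintro ⟨h1 | h1, h2 | h2⟩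
      · exact Or.inl (Or.inr ⟨h2.symm, by rw [h2]; exact eq_sub_of' h1⟩)
      · exact Or.inr (Or.inr ⟨by rw [h2]; exact eq_add_of' h1, h2.symm⟩)
      · exact Or.inr (Or.inl ⟨h2.symm, by rw [h2]; exact eq_add_of' h1⟩)
      · exact Or.inl (Or.inl ⟨by rw [h2]; exact eq_sub_of' h1, h2.symm⟩)
    · rintro ((⟨h1, h2⟩ | ⟨h1, h2⟩) | (⟨h1, h2⟩ | ⟨h1, h2⟩))
      · exact ⟨Or.inr (by rw [h1, h2]; exact sub_sub_cancel v 1), Or.inr h2.symm⟩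
      · exact ⟨Or.inl (by rw [h1, h2]; exact sub_sub_cancel v 1), Or.inl h1.symm⟩
      · exact ⟨Or.inr (by rw [h1, h2]; exact add_sub_cancel_left v 1), Or.inl h1.symm⟩
      · exact ⟨Or.inl (by rw [h1, h2]; exact add_sub_cancel_left v 1), Or.inr h2.symm⟩

lemma pred_ne_succ (v : Fin (m+3)) : s(v-1, v) ≠ s(v, v+1) := by
  intro hcontra
  rw [Sym2.eq_iff] at hcontra
  rcases hcontra with ⟨h1, h2⟩ | ⟨h1, h2⟩
  · have h3 : v - (v - 1) = 1 := sub_sub_cancel v 1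
    rw [h1, sub_self] at h3
    have h4 : (1 : Fin (m+3)).val = 1 := rfl
    rw [← h3] at h4
    simp at h4
  · have h3 : v + 1 - (v - 1) = 1 + 1 := by abel
    rw [h1, sub_self] at h3
    exact two_ne_zero' (m := m) ((Fin.ext (by rw [Fin.val_add]; rfl) : (2 : Fin (m+3)) = 1 + 1).trans h3.symm)

lemma filter_eq (v : Fin (m+3)) {inst : DecidablePred fun e : Sym2 (Fin (m+3)) => v ∈ e} :
    @Finset.filter _ (fun e => v ∈ e) inst (edgeFS (cycleGraph (m+3))) = {s(v-1, v), s(v, v+1)} := by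
  ext e
  rw [mem_filter, mem_insert, mem_singleton]
  exact edge_char v e

lemma edgeFS_eq :
    edgeFS (cycleGraph (m+3)) = Finset.image (fun i : Fin (m+3) => s(i, i+1)) univ := by
  ext e
  induction e using Sym2.ind with
  | _ a b =>
    simp only [edgeFS, Set.mem_toFinset, mem_edgeSet, adj_iff, mem_image, mem_univ, true_and]
    constructor
    · rintro (h | h)
      · exact ⟨b, by rw [Sym2.eq_iff]; exact Or.inr ⟨rfl, (eq_add_of' h).symm⟩⟩
      · exact ⟨a, by rw [Sym2.eq_iff]; exact Or.inl ⟨rfl, (eq_add_of' h).symm⟩⟩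
    · rintro ⟨i, h⟩
      rw [Sym2.eq_iff] at h
      rcases h with ⟨h1, h2⟩ | ⟨h1, h2⟩ <;> subst h1 <;> subst h2
      · exact Or.inr (add_sub_cancel_left _ _)
      · exact Or.inl (add_sub_cancel_left _ _)

lemma card_edgeFS : (edgeFS (cycleGraph (m+3))).card = m+3 := by
  rw [edgeFS_eq, Finset.card_image_of_injective _ e_inj, card_univ, Fintype.card_fin]

def pa (m : ℕ) (v : Fin (m+3)) : ℕ := fnat (m+3) ((v - 1 : Fin (m+3)).val)
def pb (m : ℕ) (v : Fin (m+3)) : ℕ := fnat (m+3) v.val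

lemma pa_lt (v : Fin (m+3)) : pa m v < m+3 := fnat_lt (by omega) (v-1).isLt
lemma pb_lt (v : Fin (m+3)) : pb m v < m+3 := fnat_lt (by omega) v.isLt

set_option maxHeartbeats 2000000 in
lemma key_compare (v w : Fin (m+3)) (hvw : v ≠ w) :
    (min (pa m v) (pb m v) ≤ min (pa m w) (pb m w) ∧
     max (pa m v) (pb m v) ≤ max (pa m w) (pb m w) ∧
     (min (pa m v) (pb m v) < min (pa m w) (pb m w) ∨
      max (pa m v) (pb m v) < max (pa m w) (pb m w))) ∨
    (min (pa m w) (pb m w) ≤ min (pa m v) (pb m v) ∧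
     max (pa m w) (pb m w) ≤ max (pa m v) (pb m v) ∧
     (min (pa m w) (pb m w) < min (pa m v) (pb m v) ∨
      max (pa m w) (pb m w) < max (pa m v) (pb m v))) := by
  have hv := v.isLt; have hw := w.isLt
  have hvw' : v.val ≠ w.val := fun h => hvw (Fin.ext h)
  unfold pa pb fnat
  rw [val_pred v, val_pred w]
  split_ifs <;> omega

lemma mul_lt_mul_aux {x y z w : ℝ} (hx : 1 ≤ x) (hy : 1 ≤ y) (hz : 1 ≤ z) (hw : 1 ≤ w)
    (hxz : x ≤ z) (hyw : y ≤ w) (h : x < z ∨ y < w) : x * y < z * w := by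
  rcases h with h | h <;> nlinarith

end CycAux

open CycAux Finset SimpleGraph

/-- Every cycle with at least three edges is universal product antimagic. -/
theorem stmt_5 (n : ℕ) (hn : 3 ≤ n) :
    UnivProdAntimagic (SimpleGraph.cycleGraph n) := by
  obtain ⟨m, rfl⟩ : ∃ m, n = m + 3 := ⟨n - 3, by omega⟩
  intro L hL1 hLcard
  rw [card_edgeFS] at hLcard
  set l := L.orderEmbOfFin hLcard with hldef
  have hlmem : ∀ k, l k ∈ L := fun k => L.orderEmbOfFin_mem hLcard k
  have hl1 : ∀ k, (1:ℝ) ≤ l k := fun k => hL1 _ (hlmem k)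
  set f := fz m with hfdef
  set φ : Sym2 (Fin (m+3)) → ℝ :=
    fun e => if h : ∃ i : Fin (m+3), e = s(i, i+1) then l (f (Classical.choose h)) else 0
    with hφdef
  have hφ : ∀ i : Fin (m+3), φ (s(i, i+1)) = l (f i) := by
    intro i
    have h : ∃ j : Fin (m+3), s(i, i+1) = s(j, j+1) := ⟨i, rfl⟩
    have hspec := Classical.choose_spec h
    have hji : Classical.choose h = i := e_inj hspec.symm
    simp only [hφdef]
    rw [dif_pos h, hji]
  -- value of vProd
  have hvprod : ∀ v : Fin (m+3), vProd (cycleGraph (m+3)) φ v = l (f (v-1)) * l (f v) := by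
    intro v
    rw [vProd, filter_eq, Finset.prod_pair (pred_ne_succ v)]
    have h1 : s(v-1, v) = s(v-1, (v-1)+1) := by
      have : v - 1 + 1 = v := by abel
      rw [this]
    rw [h1, hφ, hφ]
  -- fold into ℕ-indexed labels
  set lN : ℕ → ℝ := fun k => if h : k < m+3 then l ⟨k, h⟩ else 1 with hlNdef
  have hN1 : ∀ k, (1:ℝ) ≤ lN k := by
    intro k
    simp only [hlNdef]
    split_ifs
    · exact hl1 _
    · exact le_refl 1
  have hNmono : ∀ {a b : ℕ}, a < b → b < m+3 → lN a < lN b := by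
    intro a b hab hb
    simp only [hlNdef]
    rw [dif_pos (lt_trans hab hb), dif_pos hb]
    exact (L.orderEmbOfFin hLcard).strictMono (Fin.mk_lt_mk.mpr hab)
  have hNmono' : ∀ {a b : ℕ}, a ≤ b → b < m+3 → lN a ≤ lN b := by
    intro a b hab hb
    rcases eq_or_lt_of_le hab with rfl | h
    · exact le_refl _
    · exact le_of_lt (hNmono h hb)
  have hfN : ∀ v : Fin (m+3), l (f v) = lN (pb m v) := by
    intro v
    simp only [hlNdef]
    rw [dif_pos (pb_lt v)]
    congr 1
  have hfN' : ∀ v : Fin (m+3), l (f (v-1)) = lN (pa m v) := by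
    intro v
    simp only [hlNdef]
    rw [dif_pos (pa_lt v)]
    congr 1
  have hkey : ∀ v : Fin (m+3), vProd (cycleGraph (m+3)) φ v
      = lN (min (pa m v) (pb m v)) * lN (max (pa m v) (pb m v)) := by
    intro v
    rw [hvprod, hfN', hfN]
    rcases le_total (pa m v) (pb m v) with h | h
    · rw [min_eq_left h, max_eq_right h]
    · rw [min_eq_right h, max_eq_left h, mul_comm]
  refine ⟨φ, ⟨?_, ?_, ?_⟩, ?_⟩
  · -- MapsTo
    intro e he
    rw [Finset.mem_coe, edgeFS_eq, mem_image] at he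
    obtain ⟨i, -, rfl⟩ := he
    rw [hφ]
    exact hlmem _
  · -- InjOn
    intro e1 h1 e2 h2 heq
    rw [Finset.mem_coe, edgeFS_eq, mem_image] at h1 h2
    obtain ⟨i, -, rfl⟩ := h1
    obtain ⟨j, -, rfl⟩ := h2
    rw [hφ, hφ] at heq
    rw [fz_inj ((L.orderEmbOfFin hLcard).injective heq)]
  · -- SurjOn
    intro x hx
    have hrange := L.range_orderEmbOfFin hLcard
    rw [← hrange] at hx
    obtain ⟨k, hk⟩ := hx
    obtain ⟨i, hi⟩ := (Finite.injective_iff_surjective.mp (fz_inj (m := m))) k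
    refine ⟨s(i, i+1), ?_, ?_⟩
    · rw [Finset.mem_coe, edgeFS_eq, mem_image]
      exact ⟨i, mem_univ i, rfl⟩
    · rw [hφ, hfdef, hi, hk]
  · -- injectivity of vProd
    intro v w heq
    by_contra hne
    rcases key_compare v w hne with ⟨hmin, hmax, hstrict⟩ | ⟨hmin, hmax, hstrict⟩
    · have hlt : vProd (cycleGraph (m+3)) φ v < vProd (cycleGraph (m+3)) φ w := by
        rw [hkey, hkey]
        refine mul_lt_mul_aux (hN1 _) (hN1 _) (hN1 _) (hN1 _)
          (hNmono' hmin (lt_of_le_of_lt (min_le_left _ _) (pa_lt w)))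
          (hNmono' hmax (by rw [max_lt_iff]; exact ⟨pa_lt w, pb_lt w⟩)) ?_
        rcases hstrict with h | h
        · exact Or.inl (hNmono h (lt_of_le_of_lt (min_le_left _ _) (pa_lt w)))
        · exact Or.inr (hNmono h (by rw [max_lt_iff]; exact ⟨pa_lt w, pb_lt w⟩))
      rw [heq] at hlt
      exact lt_irrefl _ hlt
    · have hlt : vProd (cycleGraph (m+3)) φ w < vProd (cycleGraph (m+3)) φ v := by
        rw [hkey, hkey]
        refine mul_lt_mul_aux (hN1 _) (hN1 _) (hN1 _) (hN1 _)
          (hNmono' hmin (lt_of_le_of_lt (min_le_left _ _) (pa_lt v)))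
          (hNmono' hmax (by rw [max_lt_iff]; exact ⟨pa_lt v, pb_lt v⟩)) ?_
        rcases hstrict with h | h
        · exact Or.inl (hNmono h (lt_of_le_of_lt (min_le_left _ _) (pa_lt v)))
        · exact Or.inr (hNmono h (by rw [max_lt_iff]; exact ⟨pa_lt v, pb_lt v⟩))
      rw [heq] at hlt
      exact lt_irrefl _ hlt
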